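/- Suppose the interior of the convex hull of {P_1,…,P_N} in ℝⁿ is nonempty, and let h > 1. Define H_h : ℝⁿ → ℝⁿ by H_h(x) = (∑_{i=1}^N h^{f_i(x)} · P_i) / (∑_{i=1}^N h^{f_i(x)}). Then H_h is a real analytic map which is injective on ℝⁿ and whose range is exactly the interior of the convex hull of {P_1,…,P_N}; that is, H_h is a real analytic diffeomorphism from ℝⁿ onto the interior of conv{P_1,…,P_N}. -/

import Mathlib

open scoped RealInnerProductSpace

lemma cheb_aux {N : ℕ} (p b e : Fin N → ℝ) (hp : ∀ i, 0 < p i)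
    (hmono : ∀ i j, b i < b j → e i < e j) {i0 j0 : Fin N} (hne : b i0 ≠ b j0) :
    (∑ i, p i * b i) * (∑ i, p i * e i) < (∑ i, p i * e i * b i) * (∑ i, p i) := by
  have key : ∀ i j, 0 ≤ p i * p j * ((b i - b j) * (e i - e j)) := by
    intro i j
    have h2 : 0 ≤ (b i - b j) * (e i - e j) := by
      rcases lt_trichotomy (b i) (b j) with hlt | heq | hgt
      · nlinarith [hmono i j hlt]
      · rw [heq, sub_self, zero_mul]
      · nlinarith [hmono j i hgt]
    exact mul_nonneg (mul_nonneg (hp i).le (hp j).le) h2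
  have keypos : 0 < p i0 * p j0 * ((b i0 - b j0) * (e i0 - e j0)) := by
    have h2 : 0 < (b i0 - b j0) * (e i0 - e j0) := by
      rcases lt_or_gt_of_ne hne with hlt | hgt
      · nlinarith [hmono i0 j0 hlt]
      · nlinarith [hmono j0 i0 hgt]
    exact mul_pos (mul_pos (hp i0) (hp j0)) h2
  have hS : 0 < ∑ i, ∑ j, p i * p j * ((b i - b j) * (e i - e j)) := by
    apply Finset.sum_pos' (fun i _ => Finset.sum_nonneg fun j _ => key i j)
    exact ⟨i0, Finset.mem_univ _,
      Finset.sum_pos' (fun j _ => key i0 j) ⟨j0, Finset.mem_univ _, keypos⟩⟩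
  have h2 : ∑ i, ∑ j, (p i * e i * b i * p j - p i * b i * (p j * e j))
      = (∑ i, p i * e i * b i) * (∑ i, p i) - (∑ i, p i * b i) * (∑ i, p i * e i) := by
    rw [Finset.sum_mul_sum, Finset.sum_mul_sum, ← Finset.sum_sub_distrib]
    exact Finset.sum_congr rfl fun i _ => by rw [← Finset.sum_sub_distrib]
  have hexp : (∑ i, ∑ j, p i * p j * ((b i - b j) * (e i - e j)))
      = 2 * ((∑ i, p i * e i * b i) * (∑ i, p i) - (∑ i, p i * b i) * (∑ i, p i * e i)) := by
    calc ∑ i, ∑ j, p i * p j * ((b i - b j) * (e i - e j))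
        = ∑ i, ∑ j, ((p i * e i * b i * p j - p i * b i * (p j * e j))
            + (p j * e j * b j * p i - p j * b j * (p i * e i))) :=
          Finset.sum_congr rfl fun i _ => Finset.sum_congr rfl fun j _ => by ring
      _ = (∑ i, ∑ j, (p i * e i * b i * p j - p i * b i * (p j * e j)))
            + ∑ i, ∑ j, (p j * e j * b j * p i - p j * b j * (p i * e i)) := by
          simp [Finset.sum_add_distrib]
      _ = (∑ i, ∑ j, (p i * e i * b i * p j - p i * b i * (p j * e j)))
            + ∑ j, ∑ i, (p j * e j * b j * p i - p j * b j * (p i * e i)) := by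
          rw [Finset.sum_comm]
      _ = 2 * ((∑ i, p i * e i * b i) * (∑ i, p i) - (∑ i, p i * b i) * (∑ i, p i * e i)) := by
          rw [h2]; ring
  linarith [hexp ▸ hS]

variable {E : Type*} [NormedAddCommGroup E] [InnerProductSpace ℝ E]

lemma aux_term_deriv (h : ℝ) (h0 : 0 < h) (Q : E) (ci : ℝ) (x : E) :
    HasFDerivAt (fun y : E => h ^ (⟪y, Q⟫ + ci))
      ((Real.log h * h ^ (⟪x, Q⟫ + ci)) • innerSL ℝ Q) x := by
  have h1 : (fun y : E => h ^ (⟪y, Q⟫ + ci))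
      = fun y => Real.exp (Real.log h * ((innerSL ℝ Q) y + ci)) := by
    funext y
    rw [Real.rpow_def_of_pos h0]
    congr 2
    rw [innerSL_apply_apply, real_inner_comm]
  have h2 : HasFDerivAt (fun y : E => Real.log h * ((innerSL ℝ Q) y + ci))
      (Real.log h • innerSL ℝ Q) x :=
    ((innerSL ℝ Q).hasFDerivAt.add_const ci).const_mul (Real.log h)
  have h3 := h2.exp
  rw [h1]
  have hx : h ^ (⟪x, Q⟫ + ci) = Real.exp (Real.log h * ((innerSL ℝ Q) x + ci)) :=
    congrFun h1 x
  rw [hx]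
  simpa [smul_smul, mul_comm] using h3

lemma aux_term_analytic (h : ℝ) (h0 : 0 < h) (Q : E) (ci : ℝ) (x : E) :
    AnalyticAt ℝ (fun y : E => h ^ (⟪y, Q⟫ + ci)) x := by
  have h1 : (fun y : E => h ^ (⟪y, Q⟫ + ci))
      = fun y => Real.exp (Real.log h * ((innerSL ℝ Q) y + ci)) := by
    funext y
    rw [Real.rpow_def_of_pos h0]
    congr 2
    rw [innerSL_apply_apply, real_inner_comm]
  rw [h1]
  exact (analyticAt_const.mul (((innerSL ℝ Q).analyticAt x).add analyticAt_const)).rexp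

set_option maxHeartbeats 1000000 in
/-- if the convex hull of the `P_i` has nonempty interior and
`h > 1`, then the normalized exponential gradient map
`H_h(x) = (∑ h^{f_i(x)} P_i)/(∑ h^{f_i(x)})` is a real analytic diffeomorphism
from `ℝⁿ` onto the interior of the convex hull: it is analytic, injective, and
its range is exactly the interior of `conv{P_1,…,P_N}`. -/
theorem moment_map_analytic_diffeo_onto_interior
    (n N : ℕ) (hN : 1 ≤ N)
    (P : Fin N → EuclideanSpace ℝ (Fin n)) (w : Fin N → ℝ)
    (c : Fin N → ℝ) (hc : ∀ i, c i = -((‖P i‖ ^ 2 - w i) / 2))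
    (f : Fin N → EuclideanSpace ℝ (Fin n) → ℝ)
    (hf : ∀ i x, f i x = ⟪x, P i⟫ + c i)
    (hint : (interior (convexHull ℝ (Set.range P))).Nonempty)
    (h : ℝ) (hh : 1 < h)
    (H : EuclideanSpace ℝ (Fin n) → EuclideanSpace ℝ (Fin n))
    (hH : ∀ x, H x = (∑ i, h ^ (f i x))⁻¹ • ∑ i, h ^ (f i x) • P i) :
    (∀ x, AnalyticAt ℝ H x) ∧ Function.Injective H ∧
      Set.range H = interior (convexHull ℝ (Set.range P)) := by
  have hNpos : 0 < N := hN
  haveI : Nonempty (Fin N) := ⟨⟨0, hNpos⟩⟩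
  have h0 : (0:ℝ) < h := lt_trans one_pos hh
  have ht : 0 < Real.log h := Real.log_pos hh
  have hfe : ∀ i, f i = fun x => ⟪x, P i⟫ + c i := fun i => funext (hf i)
  have hepos : ∀ (i : Fin N) (x), 0 < h ^ f i x := fun i x => Real.rpow_pos_of_pos h0 _
  have hgpos : ∀ x, 0 < ∑ i, h ^ f i x :=
    fun x => Finset.sum_pos (fun i _ => hepos i x) Finset.univ_nonempty
  -- Analyticity
  have hana : ∀ x, AnalyticAt ℝ H x := by
    intro x
    have hHe : H = fun x => (∑ i, h ^ (f i x))⁻¹ • ∑ i, h ^ (f i x) • P i := funext hH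
    rw [hHe]
    have hterm : ∀ i, AnalyticAt ℝ (fun y => h ^ f i y) x := by
      intro i; rw [hfe i]; exact aux_term_analytic h h0 (P i) (c i) x
    have hsum : AnalyticAt ℝ (fun y => ∑ i, h ^ f i y) x :=
      Finset.analyticAt_fun_sum _ (fun i _ => hterm i)
    exact (hsum.inv (ne_of_gt (hgpos x))).smul
      (Finset.analyticAt_fun_sum _ (fun i _ => (hterm i).smul analyticAt_const))
  -- Derivative of the potential F
  have hF : ∀ x, HasFDerivAt (fun y => (Real.log h)⁻¹ * Real.log (∑ i, h ^ f i y))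
      (innerSL ℝ (H x)) x := by
    intro x
    have hterm : ∀ i, HasFDerivAt (fun y => h ^ f i y)
        ((Real.log h * h ^ f i x) • innerSL ℝ (P i)) x := by
      intro i
      simp only [hf]
      exact aux_term_deriv h h0 (P i) (c i) x
    have hg : HasFDerivAt (fun y => ∑ i, h ^ f i y)
        (∑ i, (Real.log h * h ^ f i x) • innerSL ℝ (P i)) x :=
      HasFDerivAt.fun_sum (fun i _ => hterm i)
    have hlog := (hg.log (ne_of_gt (hgpos x))).const_mul (Real.log h)⁻¹
    refine hlog.congr_fderiv (Eq.symm ?_)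
    apply ContinuousLinearMap.ext
    intro v
    rw [hH x]
    simp only [ContinuousLinearMap.smul_apply, ContinuousLinearMap.coe_sum',
      Finset.sum_apply, innerSL_apply_apply, smul_eq_mul, sum_inner, real_inner_smul_left]
    rw [Finset.mul_sum, Finset.mul_sum]
    rw [Finset.mul_sum]
    apply Finset.sum_congr rfl
    intro i _
    field_simp
  -- Injectivity
  have hinj : Function.Injective H := by
    intro x y hxy
    by_contra hne
    set u := x - y with hu_def
    have hu : u ≠ 0 := sub_ne_zero.mpr hne
    set b : Fin N → ℝ := fun i => ⟪P i, u⟫ with hb_def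
    -- not all b i equal
    have hbne : ∃ i j, b i ≠ b j := by
      by_contra hall
      push_neg at hall
      have hspan : affineSpan ℝ (Set.range P) = ⊤ :=
        affineSpan_eq_top_of_nonempty_interior hint
      have hvspan : vectorSpan ℝ (Set.range P) = ⊤ := by
        rw [← direction_affineSpan, hspan, AffineSubspace.direction_top]
      have hsspan : Submodule.span ℝ (Set.range P -ᵥ Set.range P) = ⊤ := by
        rw [← vectorSpan_def]; exact hvspan
      have hle : Submodule.span ℝ (Set.range P -ᵥ Set.range P) ≤ (ℝ ∙ u)ᗮ := by
        rw [Submodule.span_le]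
        rintro z ⟨a, ⟨i, rfl⟩, bb, ⟨j, rfl⟩, rfl⟩
        rw [SetLike.mem_coe, Submodule.mem_orthogonal_singleton_iff_inner_right]
        simp only [vsub_eq_sub, inner_sub_right]
        have h1 : ⟪u, P i⟫ = b i := real_inner_comm _ _
        have h2 : ⟪u, P j⟫ = b j := real_inner_comm _ _
        rw [h1, h2, hall i j, sub_self]
      rw [hsspan, top_le_iff] at hle
      have hmem : u ∈ (ℝ ∙ u)ᗮ := by rw [hle]; trivial
      have h6 := (Submodule.mem_orthogonal _ u).mp hmem u (Submodule.mem_span_singleton_self u)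
      exact hu (inner_self_eq_zero.mp h6)
    obtain ⟨i0, j0, hij⟩ := hbne
    -- inner product identities
    have hHin : ∀ z, ⟪H z, u⟫ = (∑ i, h ^ f i z)⁻¹ * ∑ i, h ^ f i z * b i := by
      intro z
      rw [hH z]
      simp only [real_inner_smul_left, sum_inner]
      rfl
    have heq : (∑ i, h ^ f i x)⁻¹ * ∑ i, h ^ f i x * b i
        = (∑ i, h ^ f i y)⁻¹ * ∑ i, h ^ f i y * b i := by
      rw [← hHin x, ← hHin y, hxy]
    -- rewrite e_x in terms of e_y
    have hsplit : ∀ i, h ^ f i x = h ^ f i y * h ^ b i := by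
      intro i
      rw [← Real.rpow_add h0]
      congr 1
      rw [hf, hf, hb_def]
      simp only []
      rw [show ⟪P i, u⟫ = ⟪P i, x⟫ - ⟪P i, y⟫ by rw [hu_def, inner_sub_right]]
      rw [real_inner_comm (P i) x, real_inner_comm (P i) y]
      ring
    have hmono : ∀ i j, b i < b j → h ^ b i < h ^ b j := by
      intro i j hij2
      exact (Real.rpow_lt_rpow_left_iff hh).mpr hij2
    have hcheb := cheb_aux (fun i => h ^ f i y) b (fun i => h ^ b i)
      (fun i => hepos i y) hmono hij
    -- contradiction
    have hgx := hgpos x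
    have hgy := hgpos y
    rw [show (∑ i, h ^ f i x) = ∑ i, h ^ f i y * h ^ b i from
      Finset.sum_congr rfl fun i _ => hsplit i] at heq hgx
    rw [show (∑ i, h ^ f i x * b i) = ∑ i, h ^ f i y * h ^ b i * b i from
      Finset.sum_congr rfl fun i _ => by rw [hsplit i]] at heq
    rw [inv_mul_eq_div, inv_mul_eq_div, div_eq_div_iff (ne_of_gt hgx) (ne_of_gt hgy)] at heq
    nlinarith [hcheb, heq]
  -- range ⊆ interior
  have hsub : Set.range H ⊆ interior (convexHull ℝ (Set.range P)) := by
    rintro _ ⟨x, rfl⟩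
    by_contra hnot
    have hconv : Convex ℝ (convexHull ℝ (Set.range P)) := convex_convexHull ℝ _
    obtain ⟨l, hl⟩ := geometric_hahn_banach_open_point hconv.interior isOpen_interior hnot
    obtain ⟨q, hq⟩ := hint
    have hle : ∀ a ∈ convexHull ℝ (Set.range P), l a ≤ l (H x) := by
      intro a ha
      by_contra hgt
      push_neg at hgt
      rcases le_or_gt (l a) (l q) with hcase | hcase
      · have hz : (1/2 : ℝ) • q + (1/2 : ℝ) • a ∈ interior (convexHull ℝ (Set.range P)) :=
          hconv.combo_interior_self_mem_interior hq ha (by norm_num) (by norm_num) (by norm_num)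
        have := hl _ hz
        rw [map_add, map_smul, map_smul] at this
        simp only [smul_eq_mul] at this
        linarith
      · set d := l a - l (H x) with hd_def
        have hd : 0 < d := by simp [hd_def]; linarith
        set C := l a - l q with hC_def
        have hC : 0 < C := by simp [hC_def]; linarith
        set θ := min (1/2 : ℝ) (d / (2 * C)) with hθ_def
        have hθpos : 0 < θ := lt_min (by norm_num) (by positivity)
        have hθle : θ ≤ 1/2 := min_le_left _ _
        have hz : θ • q + (1 - θ) • a ∈ interior (convexHull ℝ (Set.range P)) :=
          hconv.combo_interior_self_mem_interior hq ha hθpos (by linarith) (by ring)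
        have hlz := hl _ hz
        rw [map_add, map_smul, map_smul] at hlz
        simp only [smul_eq_mul] at hlz
        have hθC : θ * C ≤ d / 2 := by
          have : θ ≤ d / (2 * C) := min_le_right _ _
          calc θ * C ≤ (d / (2 * C)) * C := by nlinarith
            _ = d / 2 := by field_simp
        nlinarith
    -- all l (P i) = l (H x)
    have hlePi : ∀ i, l (P i) ≤ l (H x) :=
      fun i => hle _ (subset_convexHull ℝ _ ⟨i, rfl⟩)
    have hM : ∑ i, h ^ f i x * l (P i) = (∑ i, h ^ f i x) * l (H x) := by
      have h1 : l (H x) = (∑ i, h ^ f i x)⁻¹ * ∑ i, h ^ f i x * l (P i) := by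
        rw [hH x, map_smul, smul_eq_mul, map_sum]
        congr 1
        exact Finset.sum_congr rfl fun i _ => by rw [map_smul, smul_eq_mul]
      rw [h1]
      field_simp
    have hPiM : ∀ i, l (P i) = l (H x) := by
      intro i
      by_contra hne'
      have hlt : l (P i) < l (H x) := lt_of_le_of_ne (hlePi i) hne'
      have : ∑ j, h ^ f j x * l (P j) < ∑ j, h ^ f j x * l (H x) := by
        apply Finset.sum_lt_sum
          (fun j _ => mul_le_mul_of_nonneg_left (hlePi j) (hepos j x).le)
        exact ⟨i, Finset.mem_univ _, by
          exact mul_lt_mul_of_pos_left hlt (hepos i x)⟩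
      rw [← Finset.sum_mul] at this
      linarith [hM]
    have hhalf : convexHull ℝ (Set.range P) ⊆ {y | l (H x) ≤ l y} := by
      apply convexHull_min
      · rintro _ ⟨i, rfl⟩
        exact (hPiM i).ge
      · exact convex_halfSpace_ge ⟨fun a b => map_add l a b, fun m a => map_smul l m a⟩ _
    have : l (H x) ≤ l q := hhalf (interior_subset hq)
    linarith [hl q hq]
  -- interior ⊆ range
  have hsup : interior (convexHull ℝ (Set.range P)) ⊆ Set.range H := by
    intro p hp
    obtain ⟨ε, εpos, hball⟩ : ∃ ε > 0, Metric.ball p ε ⊆ convexHull ℝ (Set.range P) :=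
      Metric.mem_nhds_iff.mp (mem_interior_iff_mem_nhds.mp hp)
    set cmin := Finset.univ.inf' Finset.univ_nonempty c with hcmin_def
    -- support function bound
    have hsupp : ∀ q ∈ convexHull ℝ (Set.range P), ∀ v : EuclideanSpace ℝ (Fin n),
        ⟪q, v⟫ ≤ Finset.univ.sup' Finset.univ_nonempty (fun i => ⟪P i, v⟫) := by
      intro q hq v
      have hsub2 : convexHull ℝ (Set.range P) ⊆
          {y : EuclideanSpace ℝ (Fin n) |
            ⟪y, v⟫ ≤ Finset.univ.sup' Finset.univ_nonempty (fun i => ⟪P i, v⟫)} := by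
        apply convexHull_min
        · rintro _ ⟨i, rfl⟩
          show ⟪P i, v⟫ ≤ _
          exact Finset.le_sup' (fun j => ⟪P j, v⟫) (Finset.mem_univ i)
        · exact convex_halfSpace_le
            ⟨fun a b => inner_add_left a b v, fun m a => real_inner_smul_left a v m⟩ _
      exact hsub2 hq
    set F : EuclideanSpace ℝ (Fin n) → ℝ :=
      fun y => (Real.log h)⁻¹ * Real.log (∑ i, h ^ f i y) with hFdef
    have hlow : ∀ (z : EuclideanSpace ℝ (Fin n)) i, ⟪P i, z⟫ + cmin ≤ F z := by
      intro z i
      have h1 : h ^ f i z ≤ ∑ j, h ^ f j z :=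
        Finset.single_le_sum (fun j _ => (hepos j z).le) (Finset.mem_univ i)
      have h2 : Real.log (h ^ f i z) ≤ Real.log (∑ j, h ^ f j z) :=
        Real.log_le_log (hepos i z) h1
      rw [Real.log_rpow h0] at h2
      have h3 : f i z ≤ F z := by
        rw [hFdef]
        rw [show f i z = (Real.log h)⁻¹ * (f i z * Real.log h) by field_simp]
        apply mul_le_mul_of_nonneg_left h2 (by positivity)
      have h4 : ⟪P i, z⟫ + cmin ≤ f i z := by
        rw [hf, real_inner_comm]
        have : cmin ≤ c i := Finset.inf'_le _ (Finset.mem_univ i)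
        linarith
      linarith
    set G : EuclideanSpace ℝ (Fin n) → ℝ := fun y => F y - ⟪p, y⟫ with hGdef
    have hco : ∀ z, ε / 2 * ‖z‖ + cmin ≤ G z := by
      intro z
      have hsle : Finset.univ.sup' Finset.univ_nonempty (fun i => ⟪P i, z⟫) ≤ F z - cmin :=
        Finset.sup'_le _ _ fun i _ => by linarith [hlow z i]
      have hkey : ⟪p, z⟫ + ε / 2 * ‖z‖
          ≤ Finset.univ.sup' Finset.univ_nonempty (fun i => ⟪P i, z⟫) := by
        rcases eq_or_ne z 0 with rfl | hz
        · simp only [inner_zero_right, norm_zero, mul_zero, add_zero]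
          have := Finset.le_sup' (fun i => ⟪P i, (0 : EuclideanSpace ℝ (Fin n))⟫)
            (Finset.mem_univ (⟨0, hNpos⟩ : Fin N))
          simpa using this
        · have hzpos : 0 < ‖z‖ := norm_pos_iff.mpr hz
          set q : EuclideanSpace ℝ (Fin n) := p + (ε / 2 * ‖z‖⁻¹) • z with hqdef
          have hqball : q ∈ Metric.ball p ε := by
            rw [Metric.mem_ball, dist_eq_norm, hqdef]
            rw [show p + (ε / 2 * ‖z‖⁻¹) • z - p = (ε / 2 * ‖z‖⁻¹) • z by abel]
            rw [norm_smul]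
            rw [Real.norm_eq_abs, abs_of_pos (by positivity)]
            rw [mul_assoc, inv_mul_cancel₀ (ne_of_gt hzpos)]
            linarith
          have := hsupp q (hball hqball) z
          rw [hqdef, inner_add_left, real_inner_smul_left,
            real_inner_self_eq_norm_mul_norm] at this
          calc ⟪p, z⟫ + ε / 2 * ‖z‖
              = ⟪p, z⟫ + ε / 2 * ‖z‖⁻¹ * (‖z‖ * ‖z‖) := by
                field_simp
            _ ≤ _ := this
      linarith
    have hG' : ∀ z, HasFDerivAt G (innerSL ℝ (H z) - innerSL ℝ p) z :=
      fun z => (hF z).sub (innerSL ℝ p).hasFDerivAt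
    have hGcont : Continuous G :=
      continuous_iff_continuousAt.mpr fun z => (hG' z).differentiableAt.continuousAt
    have hGtend : Filter.Tendsto G (Filter.cocompact _) Filter.atTop := by
      apply Filter.tendsto_atTop_mono hco
      apply Filter.tendsto_atTop_add_const_right
      exact (tendsto_norm_cocompact_atTop.const_mul_atTop (by positivity))
    obtain ⟨x₀, hx₀⟩ := hGcont.exists_forall_le hGtend
    have hmin : IsLocalMin G x₀ := Filter.Eventually.of_forall hx₀
    have hzero := hmin.hasFDerivAt_eq_zero (hG' x₀)
    have hHp : H x₀ = p := by
      have := congrFun (congrArg DFunLike.coe hzero) (H x₀ - p)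
      rw [ContinuousLinearMap.sub_apply, innerSL_apply_apply, innerSL_apply_apply,
        ContinuousLinearMap.zero_apply] at this
      have h5 : ⟪H x₀ - p, H x₀ - p⟫ = 0 := by
        rw [inner_sub_left]; linarith [this]
      exact sub_eq_zero.mp (inner_self_eq_zero.mp h5)
    exact ⟨x₀, hHp⟩
  exact ⟨hana, hinj, Set.Subset.antisymm hsub hsup⟩
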